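/- Suppose α is infinite and the cardinality of the set of symbols of L is at most the cardinality of α. Let p be a set of L-formulas, each with free variables among x₁,…,xₙ, and suppose there exist a model of T and an n-tuple of its elements realizing every formula of p. Then there exist a model M ∈ X_T and a tuple a⃗ from the carrier of M such that M ⊨ φ(a⃗) for every φ ∈ p (i.e., every satisfiable type over T is realized in the saturated set X_T of small models). -/

import Mathlib

open FirstOrder FirstOrder.Language Set Topology
open Cardinal

universe u v w x

variable {L : FirstOrder.Language.{u, v}} {α : Type w}

/-- A model of `T` whose carrier is a subset of `α`: an element of the set `X_T` of
small models of `T`. -/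
structure SmallModel (L : FirstOrder.Language.{u, v}) (α : Type w) (T : L.Theory) where
  carrier : Set α
  struc : L.Structure carrier
  models : @FirstOrder.Language.Theory.Model L carrier struc T

/-- `M.Sat φ v` means that the formula `φ` is realized in the small model `M`
at the valuation `v`. -/
def SmallModel.Sat {T : L.Theory} (M : SmallModel L α T) {ι : Type*}
    (φ : L.Formula ι) (v : ι → M.carrier) : Prop :=
  letI := M.struc
  φ.Realize v

/-- The basic open set `⟨φ, b⟩ ⊆ X_T`. -/
def XBasic {T : L.Theory} {n : ℕ} (φ : L.Formula (Fin n)) (b : Fin n → α) :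
    Set (SmallModel L α T) :=
  {M | ∃ h : ∀ i, b i ∈ M.carrier, M.Sat φ fun i => ⟨b i, h i⟩}

/-- The logical topology on `X_T`, generated by the sets `⟨φ, b⟩`. -/
instance SmallModel.instTopologicalSpace {T : L.Theory} :
    TopologicalSpace (SmallModel L α T) :=
  TopologicalSpace.generateFrom
    {U | ∃ (n : ℕ) (φ : L.Formula (Fin n)) (b : Fin n → α), U = XBasic φ b}

/-- **Every satisfiable type over `T` is realized in the saturated set `X_T` of small
models**: if `α` is infinite, the language has at most `|α|` many symbols, and the set `p`
of formulas in the variables `x₁, …, xₙ` is realized by some tuple in some model of `T`,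
then it is realized by a tuple in a model belonging to `X_T`. -/
theorem aux_realize {T : L.Theory} {n : ℕ} (p : Set (L.Formula (Fin n)))
    {N : Type x} [S : L.Structure N] (hT : N ⊨ T) (vN : Fin n → N)
    (hv : ∀ φ ∈ p, φ.Realize vN) (f : N ↪ α) :
    ∃ (M : SmallModel L α T) (v : Fin n → M.carrier), ∀ φ ∈ p, M.Sat φ v := by
  let e : N ≃ Set.range f := Equiv.ofInjective f f.injective
  letI str : L.Structure (Set.range f) := e.inducedStructure
  let g := e.inducedStructureEquiv (L := L)
  haveI := hT
  refine ⟨⟨Set.range f, str, StrongHomClass.theory_model g⟩, fun i => e (vN i), fun φ hφ => ?_⟩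
  exact (StrongHomClass.realize_formula g (φ := φ) (v := vN)).2 (hv φ hφ)

theorem realized_in_small_models [Infinite α]
    (hcard : Cardinal.lift.{w} L.card ≤ Cardinal.lift.{max u v} (Cardinal.mk α))
    {T : L.Theory} {n : ℕ} (p : Set (L.Formula (Fin n)))
    (hsat : ∃ (M : Type x) (S : L.Structure M), @FirstOrder.Language.Theory.Model L M S T ∧
      ∃ vM : Fin n → M, ∀ φ ∈ p, @FirstOrder.Language.Formula.Realize L M S (Fin n) φ vM) :
    ∃ (M : SmallModel L α T) (v : Fin n → M.carrier), ∀ φ ∈ p, M.Sat φ v := by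
  obtain ⟨M, S, hT, vM, hvM⟩ := hsat
  rcases isEmpty_or_nonempty M with hM | hM
  · exact aux_realize p hT vM hvM ⟨isEmptyElim, fun a => isEmptyElim a⟩
  · -- Skolem closure of the range of vM
    let S' := Substructure.closure (L.sum L.skolem₁) (Set.range vM)
    let E := S'.elementarySkolem₁Reduct
    haveI : M ⊨ T := hT
    have hmem : ∀ i, vM i ∈ E := fun i =>
      Substructure.subset_closure (Set.mem_range_self i)
    have hrealize : ∀ φ ∈ p, φ.Realize (fun i => (⟨vM i, hmem i⟩ : E)) := by
      intro φ hφ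
      have h := E.subtype.map_formula φ (fun i => (⟨vM i, hmem i⟩ : E))
      rw [← h]
      convert hvM φ hφ
      rfl
    -- cardinality bound
    have hcardE : Cardinal.lift.{w} (#E) ≤ Cardinal.lift.{x} (#α) := by
      have h1 : Cardinal.lift.{max u v, x} (#S') ≤
          max ℵ₀ (Cardinal.lift.{max u v, x} #(Set.range vM) +
            Cardinal.lift.{x, max u v} #(Σ i, (L.sum L.skolem₁).Functions i)) :=
        Substructure.lift_card_closure_le
      have h2 : Cardinal.lift.{max u v, x} #(Set.range vM) ≤ ℵ₀ := by
        rw [Cardinal.lift_le_aleph0]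
        exact (Cardinal.lt_aleph0_of_finite _).le
      have h3 : #(Σ i, (L.sum L.skolem₁).Functions i) ≤ max ℵ₀ L.card :=
        card_functions_sum_skolem₁_le
      have h4 : Cardinal.lift.{max u v, x} (#E) ≤
          max ℵ₀ (Cardinal.lift.{x, max u v} L.card) := by
        refine h1.trans (max_le (le_max_left _ _)
          (le_trans (add_le_add h2 (Cardinal.lift_le.2 h3)) ?_))
        rw [Cardinal.lift_max, Cardinal.lift_aleph0, Cardinal.add_eq_max le_rfl,
          ← max_assoc, max_self]
      rw [← Cardinal.lift_le.{max u v}, Cardinal.lift_lift, Cardinal.lift_lift]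
      have h5 := Cardinal.lift_le.{w}.2 h4
      rw [Cardinal.lift_lift, Cardinal.lift_max, Cardinal.lift_aleph0,
        Cardinal.lift_lift] at h5
      have haleph : (ℵ₀ : Cardinal) ≤ Cardinal.lift.{max x u v, w} (#α) :=
        Cardinal.aleph0_le_lift.2 (Cardinal.infinite_iff.1 ‹Infinite α›)
      have h6 := Cardinal.lift_le.{x}.2 hcard
      rw [Cardinal.lift_lift, Cardinal.lift_lift] at h6
      exact h5.trans (max_le haleph h6)
    obtain ⟨f⟩ := Cardinal.lift_mk_le'.1 hcardE
    exact aux_realize p inferInstance _ hrealize f
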